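/- Let H be a compact class of continuous functions on [u,v]^d uniformly bounded by D, let Y and the labels take values in [-D,D], and let the m training samples be i.i.d. copies of (X,Y). Then for every ε ∈ (0,1), with probability at least 1 − 2·Cov(H, ε/(32D))·exp(−m ε²/(128 D⁴)), the empirical risk minimizer f̂ over H satisfies E(f̂) − min_{f∈H} E(f) ≤ ε, where Cov(H, r) denotes the minimal number of closed ||·||_∞-balls of radius r needed to cover H. -/

import Mathlib

open Real MeasureTheory ProbabilityTheory

set_option maxHeartbeats 1000000


lemma hoeffding_aux {p : ℝ} (hp0 : 0 ≤ p) (hp1 : p ≤ 1) (h : ℝ) :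
    Real.log (1 - p + p * Real.exp h) ≤ p * h + h ^ 2 / 8 := by
  set W : ℝ → ℝ := fun x => 1 - p + p * Real.exp x with hWdef
  have hw : ∀ x, 0 < W x := by
    intro x
    rcases eq_or_lt_of_le hp0 with hp | hp
    · simp [hWdef, ← hp]
    · have h1 : 0 < p * Real.exp x := mul_pos hp (Real.exp_pos x)
      simp only [hWdef]; linarith
  have hW : ∀ x, HasDerivAt W (p * Real.exp x) x := by
    intro x
    exact ((Real.hasDerivAt_exp x).const_mul p).const_add (1 - p)
  set φ : ℝ → ℝ := fun x => p * x + x ^ 2 / 8 - Real.log (W x) with hφdef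
  set ψ : ℝ → ℝ := fun x => p + x / 4 - p * Real.exp x / W x with hψdef
  have hφ' : ∀ x, HasDerivAt φ (ψ x) x := by
    intro x
    have h1 : HasDerivAt (fun x : ℝ => p * x + x ^ 2 / 8) (p + x * 2 / 8 * 1) x := by
      have := ((hasDerivAt_id x).const_mul p).fun_add
        (((hasDerivAt_pow 2 x)).div_const 8)
      simpa [mul_comm] using this
    have h2 : HasDerivAt (fun x => Real.log (W x)) (p * Real.exp x / W x) x :=
      (hW x).log (hw x).ne'
    have := h1.fun_sub h2
    refine this.congr_deriv ?_
    simp only [hψdef]; ring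
  have hψ' : ∀ x, HasDerivAt ψ (1/4 - p * Real.exp x * (1 - p) / (W x) ^ 2) x := by
    intro x
    have h1 : HasDerivAt (fun x : ℝ => p + x / 4) (1/4) x := by
      simpa using ((hasDerivAt_id x).div_const 4).const_add p
    have h2 : HasDerivAt (fun x => p * Real.exp x / W x)
        ((p * Real.exp x * W x - p * Real.exp x * (p * Real.exp x)) / (W x) ^ 2) x :=
      ((Real.hasDerivAt_exp x).const_mul p).div (hW x) (hw x).ne'
    have := h1.fun_sub h2
    refine this.congr_deriv ?_
    have hnum : p * Real.exp x * W x - p * Real.exp x * (p * Real.exp x)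
        = p * Real.exp x * (1 - p) := by
      simp only [hWdef]; ring
    rw [hnum]
  have hψ'nonneg : ∀ x, 0 ≤ 1/4 - p * Real.exp x * (1 - p) / (W x) ^ 2 := by
    intro x
    rw [sub_nonneg, div_le_iff₀ (pow_pos (hw x) 2)]
    have : W x = (1 - p) + p * Real.exp x := rfl
    nlinarith [sq_nonneg ((1 - p) - p * Real.exp x)]
  have hψmono : Monotone ψ := by
    have hdiff : Differentiable ℝ ψ := fun x => (hψ' x).differentiableAt
    refine monotone_of_deriv_nonneg hdiff ?_
    intro x
    rw [(hψ' x).deriv]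
    exact hψ'nonneg x
  have hψ0 : ψ 0 = 0 := by
    simp [hψdef, hWdef]
  have hφ0 : φ 0 = 0 := by
    simp [hφdef, hWdef]
  have hφnonneg : ∀ x, 0 ≤ φ x := by
    intro x
    rcases le_total 0 x with hx | hx
    · have hmono : MonotoneOn φ (Set.Ici 0) := by
        refine monotoneOn_of_deriv_nonneg (convex_Ici 0)
          (Continuous.continuousOn (by
            have : ∀ y, DifferentiableAt ℝ φ y := fun y => (hφ' y).differentiableAt
            exact (Differentiable.continuous this))) ?_ ?_
        · intro y _
          exact (hφ' y).differentiableAt.differentiableWithinAt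
        · intro y hy
          rw [(hφ' y).deriv]
          rw [interior_Ici] at hy
          have := hψmono (le_of_lt hy)
          rw [hψ0] at this
          linarith
      have := hmono Set.self_mem_Ici (Set.mem_Ici.2 hx) hx
      rwa [hφ0] at this
    · have hanti : AntitoneOn φ (Set.Iic 0) := by
        refine antitoneOn_of_deriv_nonpos (convex_Iic 0)
          (Continuous.continuousOn (by
            have : ∀ y, DifferentiableAt ℝ φ y := fun y => (hφ' y).differentiableAt
            exact (Differentiable.continuous this))) ?_ ?_
        · intro y _
          exact (hφ' y).differentiableAt.differentiableWithinAt
        · intro y hy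
          rw [(hφ' y).deriv]
          rw [interior_Iic] at hy
          have := hψmono (le_of_lt hy)
          rw [hψ0] at this
          linarith
      have := hanti (Set.mem_Iic.2 hx) Set.self_mem_Iic hx
      rwa [hφ0] at this
  have := hφnonneg h
  simp only [hφdef] at this
  linarith


lemma integrable_of_bdd {Ω : Type*} [MeasurableSpace Ω] {P : Measure Ω}
    [IsFiniteMeasure P] {f : Ω → ℝ} (hf : Measurable f) {C : ℝ}
    (hC : ∀ᵐ ω ∂P, |f ω| ≤ C) : Integrable f P := by
  refine ⟨hf.aestronglyMeasurable, ?_⟩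
  exact MeasureTheory.HasFiniteIntegral.of_bounded (C := C) (by
    filter_upwards [hC] with ω hω
    simpa using hω)

lemma hoeffding_lemma {Ω : Type*} [MeasurableSpace Ω] (P : Measure Ω)
    [IsProbabilityMeasure P] {Z : Ω → ℝ} (hZ : Measurable Z) {a b : ℝ}
    (hbd : ∀ᵐ ω ∂P, Z ω ∈ Set.Icc a b) (hmean : ∫ ω, Z ω ∂P = 0) (t : ℝ) :
    ∫ ω, Real.exp (t * Z ω) ∂P ≤ Real.exp (t ^ 2 * (b - a) ^ 2 / 8) := by
  -- basic facts
  have hZint : Integrable Z P := integrable_of_bdd hZ (C := |a| + |b|) (by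
    filter_upwards [hbd] with ω hω
    rw [abs_le]
    constructor
    · linarith [neg_abs_le a, abs_nonneg b, hω.1]
    · linarith [le_abs_self b, abs_nonneg a, hω.2])
  have ha0 : a ≤ 0 := by
    have h1 : ∫ ω, (a : ℝ) ∂P ≤ ∫ ω, Z ω ∂P := by
      refine integral_mono_ae (integrable_const a) hZint ?_
      filter_upwards [hbd] with ω hω using hω.1
    simpa [hmean] using h1
  have hb0 : 0 ≤ b := by
    have h1 : ∫ ω, Z ω ∂P ≤ ∫ ω, (b : ℝ) ∂P := by
      refine integral_mono_ae hZint (integrable_const b) ?_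
      filter_upwards [hbd] with ω hω using hω.2
    simpa [hmean] using h1
  rcases eq_or_lt_of_le (ha0.trans hb0) with hab | hab
  · -- degenerate case a = b, hence a = b = 0 and Z = 0 a.e.
    have ha : a = 0 := le_antisymm ha0 (by rw [hab]; exact hb0)
    have hb : b = 0 := by rw [← hab, ha]
    have hone : ∀ᵐ ω ∂P, Real.exp (t * Z ω) = 1 := by
      filter_upwards [hbd] with ω hω
      rw [ha, hb] at hω
      have hz : Z ω = 0 := le_antisymm hω.2 hω.1
      simp [hz]
    have : ∫ ω, Real.exp (t * Z ω) ∂P = 1 := by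
      rw [integral_congr_ae hone]
      simp
    rw [this]
    exact Real.one_le_exp (by positivity)
  · -- main case a < b
    have hba : (b : ℝ) - a ≠ 0 := sub_ne_zero.2 hab.ne'
    have hbapos : (0:ℝ) < b - a := by linarith
    set p : ℝ := -a / (b - a) with hp
    have hp' : p * (b - a) = -a := by rw [hp]; field_simp
    have hp0 : 0 ≤ p := div_nonneg (neg_nonneg.2 ha0) hbapos.le
    have hp1 : p ≤ 1 := by
      rw [hp, div_le_one hbapos]; linarith
    set C1 : ℝ := (b * Real.exp (t*a) - a * Real.exp (t*b)) / (b - a) with hC1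
    set C2 : ℝ := (Real.exp (t*b) - Real.exp (t*a)) / (b - a) with hC2
    -- pointwise convexity bound
    have key : ∀ z ∈ Set.Icc a b, Real.exp (t * z) ≤ C1 + C2 * z := by
      intro z hz
      have hlam : (0:ℝ) ≤ (b - z)/(b-a) := div_nonneg (by linarith [hz.2]) hbapos.le
      have hmu : (0:ℝ) ≤ (z - a)/(b-a) := div_nonneg (by linarith [hz.1]) hbapos.le
      have hsum : (b - z)/(b-a) + (z - a)/(b-a) = 1 := by field_simp; ring
      have hcv := convexOn_exp.2 (Set.mem_univ (t*a)) (Set.mem_univ (t*b)) hlam hmu hsum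
      simp only [smul_eq_mul] at hcv
      have harg : (b-z)/(b-a) * (t*a) + (z-a)/(b-a)*(t*b) = t*z := by
        field_simp; ring
      rw [harg] at hcv
      have hrhs : (b-z)/(b-a) * Real.exp (t*a) + (z-a)/(b-a) * Real.exp (t*b)
          = C1 + C2 * z := by
        rw [hC1, hC2]; field_simp; ring
      linarith
    -- integrate
    have hintexp : Integrable (fun ω => Real.exp (t * Z ω)) P := by
      refine integrable_of_bdd ((hZ.const_mul t).exp) (C := Real.exp (|t| * (|a|+|b|))) ?_
      filter_upwards [hbd] with ω hω
      rw [Real.abs_exp, Real.exp_le_exp]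
      have h1 : |Z ω| ≤ |a| + |b| := by
        rw [abs_le]
        constructor
        · linarith [neg_abs_le a, abs_nonneg b, hω.1]
        · linarith [le_abs_self b, abs_nonneg a, hω.2]
      calc t * Z ω ≤ |t * Z ω| := le_abs_self _
        _ = |t| * |Z ω| := abs_mul _ _
        _ ≤ |t| * (|a| + |b|) := by
            exact mul_le_mul_of_nonneg_left h1 (abs_nonneg t)
    have hintrhs : Integrable (fun ω => C1 + C2 * Z ω) P :=
      (integrable_const C1).add (hZint.const_mul C2)
    have hint : ∫ ω, Real.exp (t * Z ω) ∂P ≤ C1 := by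
      have h1 : ∫ ω, Real.exp (t * Z ω) ∂P ≤ ∫ ω, (C1 + C2 * Z ω) ∂P := by
        refine integral_mono_ae hintexp hintrhs ?_
        filter_upwards [hbd] with ω hω using key _ hω
      have h2 : ∫ ω, (C1 + C2 * Z ω) ∂P = C1 := by
        rw [integral_add (integrable_const C1) (hZint.const_mul C2),
          integral_const, integral_const_mul, hmean]
        simp
      linarith
    -- bound C1
    have hWpos : 0 < 1 - p + p * Real.exp (t*(b-a)) := by
      rcases eq_or_lt_of_le hp0 with hpz | hpz
      · simp [← hpz]
      · have := mul_pos hpz (Real.exp_pos (t*(b-a)))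
        linarith
    have hC1eq : C1 = Real.exp (t*a) * (1 - p + p * Real.exp (t*(b-a))) := by
      rw [hC1, hp]
      rw [show t*b = t*a + t*(b-a) by ring, Real.exp_add]
      field_simp
      ring
    have hfinal : C1 ≤ Real.exp (t ^ 2 * (b - a) ^ 2 / 8) := by
      rw [hC1eq, ← Real.exp_log hWpos, ← Real.exp_add, Real.exp_le_exp]
      have hlog := hoeffding_aux hp0 hp1 (t*(b-a))
      have heq : t*a + (p*(t*(b-a)) + (t*(b-a))^2/8) = t^2*(b-a)^2/8 := by
        linear_combination t * hp'
      linarith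
    linarith

lemma integrable_exp_mul_of_bdd {Ω : Type*} [MeasurableSpace Ω] (P : Measure Ω)
    [IsProbabilityMeasure P] {Z : Ω → ℝ} (hZ : Measurable Z) {a b t : ℝ}
    (hbd : ∀ᵐ ω ∂P, Z ω ∈ Set.Icc a b) :
    Integrable (fun ω => Real.exp (t * Z ω)) P := by
  refine integrable_of_bdd ((hZ.const_mul t).exp) (C := Real.exp (|t| * (|a|+|b|))) ?_
  filter_upwards [hbd] with ω hω
  rw [Real.abs_exp, Real.exp_le_exp]
  have h1 : |Z ω| ≤ |a| + |b| := by
    rw [abs_le]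
    constructor
    · linarith [neg_abs_le a, abs_nonneg b, hω.1]
    · linarith [le_abs_self b, abs_nonneg a, hω.2]
  calc t * Z ω ≤ |t * Z ω| := le_abs_self _
    _ = |t| * |Z ω| := abs_mul _ _
    _ ≤ |t| * (|a| + |b|) := mul_le_mul_of_nonneg_left h1 (abs_nonneg t)

lemma hoeffding_sum {Ω : Type*} [MeasurableSpace Ω] (P : Measure Ω)
    [IsProbabilityMeasure P] {m : ℕ} {Z : Fin m → Ω → ℝ}
    (hmeas : ∀ i, Measurable (Z i))
    (hindep : iIndepFun Z P)
    {a b : ℝ} (hab : a < b) (hbd : ∀ i, ∀ᵐ ω ∂P, Z i ω ∈ Set.Icc a b)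
    (hmean : ∀ i, ∫ ω, Z i ω ∂P = 0) {s : ℝ} (hs : 0 ≤ s) :
    (P {ω | (m:ℝ) * s ≤ ∑ i, Z i ω}).toReal
      ≤ Real.exp (-2 * m * s^2 / (b-a)^2) := by
  have hbapos : (0:ℝ) < b - a := by linarith
  set t : ℝ := 4*s/(b-a)^2 with ht_def
  have ht : 0 ≤ t := by positivity
  have hint : ∀ i, Integrable (fun ω => Real.exp (t * Z i ω)) P :=
    fun i => integrable_exp_mul_of_bdd P (hmeas i) (hbd i)
  have hintsum : Integrable (fun ω => Real.exp (t * (∑ i, Z i) ω)) P :=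
    hindep.integrable_exp_mul_sum hmeas (fun i _ => hint i)
  have hS := measure_ge_le_exp_mul_mgf (μ := P) (X := ∑ i, Z i) ((m:ℝ)*s) ht hintsum
  have hset : {ω | (m:ℝ)*s ≤ ∑ i, Z i ω} = {ω | (m:ℝ)*s ≤ (∑ i, Z i) ω} := by
    ext ω; simp [Finset.sum_apply]
  rw [hset]
  have hmgf_le : ∀ i, mgf (Z i) P t ≤ Real.exp (t^2*(b-a)^2/8) := fun i =>
    hoeffding_lemma P (hmeas i) (hbd i) (hmean i) t
  have hprod : mgf (∑ i, Z i) P t ≤ Real.exp (t^2*(b-a)^2/8) ^ m := by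
    rw [hindep.mgf_sum hmeas]
    calc ∏ i, mgf (Z i) P t ≤ ∏ _i : Fin m, Real.exp (t^2*(b-a)^2/8) :=
          Finset.prod_le_prod (fun i _ => mgf_nonneg) (fun i _ => hmgf_le i)
      _ = Real.exp (t^2*(b-a)^2/8) ^ m := by
          rw [Finset.prod_const, Finset.card_univ, Fintype.card_fin]
  calc (P {ω | (m:ℝ)*s ≤ (∑ i, Z i) ω}).toReal
      ≤ Real.exp (-t * ((m:ℝ)*s)) * mgf (∑ i, Z i) P t := hS
    _ ≤ Real.exp (-t * ((m:ℝ)*s)) * Real.exp (t^2*(b-a)^2/8) ^ m :=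
        mul_le_mul_of_nonneg_left hprod (Real.exp_pos _).le
    _ = Real.exp (-t * ((m:ℝ)*s) + m * (t^2*(b-a)^2/8)) := by
        rw [← Real.exp_nat_mul, ← Real.exp_add]
    _ = Real.exp (-2 * m * s^2 / (b-a)^2) := by
        congr 1
        rw [ht_def]
        field_simp
        ring

lemma sq_risk_pt {fx gx y D r : ℝ} (hf : |fx| ≤ D) (hg : |gx| ≤ D) (hy : |y| ≤ D)
    (hfg : |fx - gx| ≤ r) : |(fx - y)^2 - (gx - y)^2| ≤ 4*D*r := by
  have hr0 : 0 ≤ r := le_trans (abs_nonneg _) hfg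
  have he : (fx - y)^2 - (gx - y)^2 = (fx - gx) * ((fx - y) + (gx - y)) := by ring
  rw [he, abs_mul]
  have h2 : |(fx - y) + (gx - y)| ≤ 4*D := by
    rw [abs_le] at hf hg hy ⊢
    exact ⟨by linarith, by linarith⟩
  calc |fx-gx| * |(fx - y) + (gx - y)| ≤ r * (4*D) :=
      mul_le_mul hfg h2 (abs_nonneg _) hr0
    _ = 4*D*r := by ring

theorem generalization_error_bound
    {Ω : Type*} [MeasurableSpace Ω] (P : Measure Ω) [IsProbabilityMeasure P]
    (u v : ℝ) (huv : u < v) (d m : ℕ) (D : ℝ) (hD : 1 ≤ D) (ε : ℝ) (hε : ε ∈ Set.Ioo (0:ℝ) 1)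
    (X : Ω → (Fin d → ℝ)) (Y : Ω → ℝ)
    (hX : Measurable X) (hY : Measurable Y)
    (hXrange : ∀ ω, X ω ∈ Set.Icc (fun _ => u) (fun _ => v))
    (hYrange : ∀ ω, |Y ω| ≤ D)
    -- the m training samples, i.i.d. with the law of (X, Y)
    (Xi : Fin m → Ω → (Fin d → ℝ)) (Yi : Fin m → Ω → ℝ)
    (hXi : ∀ i, Measurable (Xi i)) (hYi : ∀ i, Measurable (Yi i))
    (hIndep : ProbabilityTheory.iIndepFun
      (fun i ω => (Xi i ω, Yi i ω)) P)
    (hIdent : ∀ i, P.map (fun ω => (Xi i ω, Yi i ω)) = P.map (fun ω => (X ω, Y ω)))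
    -- the hypothesis class: measurable (continuous) functions uniformly bounded by D
    (H : Set ((Fin d → ℝ) → ℝ)) (hHne : H.Nonempty)
    (hHmeas : ∀ f ∈ H, Measurable f)
    (hHbdd : ∀ f ∈ H, ∀ x ∈ Set.Icc (fun _ => u) (fun _ => v : Fin d → ℝ), |f x| ≤ D)
    -- a cover of H of cardinality N by uniform-norm balls of radius ε/(32 D)
    (N : ℕ) (c : Fin N → ((Fin d → ℝ) → ℝ)) (hc : ∀ j, c j ∈ H)
    (hcover : ∀ f ∈ H, ∃ j,
      ∀ x ∈ Set.Icc (fun _ => u) (fun _ => v : Fin d → ℝ), |f x - c j x| ≤ ε / (32 * D))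
    -- the risk minimizer over H
    (fH : (Fin d → ℝ) → ℝ) (hfH : fH ∈ H)
    (hfHmin : ∀ f ∈ H,
      (∫ ω, (fH (X ω) - Y ω) ^ 2 ∂P) ≤ ∫ ω, (f (X ω) - Y ω) ^ 2 ∂P)
    -- the (measurable) empirical risk minimizer
    (fhat : Ω → ((Fin d → ℝ) → ℝ))
    (hfhatH : ∀ ω, fhat ω ∈ H)
    (hfhatmin : ∀ ω, ∀ f ∈ H,
      (1 / (m : ℝ)) * ∑ i, (fhat ω (Xi i ω) - Yi i ω) ^ 2
        ≤ (1 / (m : ℝ)) * ∑ i, (f (Xi i ω) - Yi i ω) ^ 2)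
    (hfhatriskMeas : Measurable (fun ω => ∫ ω', (fhat ω (X ω') - Y ω') ^ 2 ∂P)) :
    ENNReal.ofReal (1 - 2 * N * Real.exp (-(m * ε ^ 2) / (128 * D ^ 4)))
      ≤ P {ω | (∫ ω', (fhat ω (X ω') - Y ω') ^ 2 ∂P)
                - (∫ ω', (fH (X ω') - Y ω') ^ 2 ∂P) ≤ ε} := by
  classical
  by_cases hpos : (0:ℝ) < 1 - 2 * N * Real.exp (-(m * ε ^ 2) / (128 * D ^ 4))
  swap
  · rw [ENNReal.ofReal_of_nonpos (by linarith [not_lt.1 hpos])]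
    exact zero_le
  have hD0 : (0:ℝ) < D := lt_of_lt_of_le one_pos hD
  have hε0 : 0 < ε := hε.1
  have hNpos : 0 < N := by
    obtain ⟨f, hf⟩ := hHne
    obtain ⟨j, -⟩ := hcover f hf
    exact j.pos
  have hexp_lt : Real.exp (-(m * ε ^ 2) / (128 * D ^ 4)) < 1 := by
    have hN1 : (1:ℝ) ≤ N := by exact_mod_cast hNpos
    nlinarith [Real.exp_pos (-(m * ε ^ 2) / (128 * D ^ 4))]
  have hm : 0 < m := by
    rcases Nat.eq_zero_or_pos m with hm0 | hm0
    · rw [hm0] at hexp_lt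
      norm_num at hexp_lt
    · exact hm0
  have hm0 : (0:ℝ) < m := by exact_mod_cast hm
  set Box : Set (Fin d → ℝ) := Set.Icc (fun _ => u) (fun _ => v) with hBoxdef
  have hBoxm : MeasurableSet Box := by
    rw [hBoxdef, ← Set.pi_univ_Icc]
    exact MeasurableSet.univ_pi (fun i => measurableSet_Icc)
  -- integrability of risks
  have hint : ∀ f ∈ H, Integrable (fun ω => (f (X ω) - Y ω)^2) P := by
    intro f hf
    refine integrable_of_bdd ((((hHmeas f hf).comp hX).sub hY).pow_const 2)
      (C := 4*D^2) (Filter.Eventually.of_forall fun ω => ?_)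
    have h1 : |f (X ω)| ≤ D := hHbdd f hf _ (hXrange ω)
    have h2 : |Y ω| ≤ D := hYrange ω
    rw [abs_le] at h1 h2
    rw [abs_of_nonneg (sq_nonneg _)]
    nlinarith
  -- true risk is Lipschitz w.r.t. sup distance
  have hriskLip : ∀ f ∈ H, ∀ g ∈ H, ∀ r : ℝ, (∀ x ∈ Box, |f x - g x| ≤ r) →
      |(∫ ω, (f (X ω) - Y ω)^2 ∂P) - (∫ ω, (g (X ω) - Y ω)^2 ∂P)| ≤ 4*D*r := by
    intro f hf g hg r hr
    rw [← integral_sub (hint f hf) (hint g hg)]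
    have h1 : ∀ ω, |(f (X ω) - Y ω)^2 - (g (X ω) - Y ω)^2| ≤ 4*D*r := fun ω =>
      sq_risk_pt (hHbdd f hf _ (hXrange ω)) (hHbdd g hg _ (hXrange ω)) (hYrange ω)
        (hr _ (hXrange ω))
    calc |∫ ω, ((f (X ω) - Y ω)^2 - (g (X ω) - Y ω)^2) ∂P|
        ≤ ∫ ω, |(f (X ω) - Y ω)^2 - (g (X ω) - Y ω)^2| ∂P :=
          by simpa [Real.norm_eq_abs] using
            norm_integral_le_integral_norm (μ := P)
              (f := fun ω => (f (X ω) - Y ω)^2 - (g (X ω) - Y ω)^2)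
      _ ≤ ∫ _ω, (4*D*r : ℝ) ∂P := by
          refine integral_mono (((hint f hf).sub (hint g hg)).abs) (integrable_const _) ?_
          exact h1
      _ = 4*D*r := by simp
  -- a.e. the samples are in range
  have hprod_meas : ∀ i, Measurable (fun ω => (Xi i ω, Yi i ω)) :=
    fun i => (hXi i).prodMk (hYi i)
  have hXYmeas : Measurable (fun ω => (X ω, Y ω)) := hX.prodMk hY
  have hnull : ∀ i, ∀ᵐ ω ∂P, Xi i ω ∈ Box ∧ |Yi i ω| ≤ D := by
    intro i
    set S : Set ((Fin d → ℝ) × ℝ) := Box ×ˢ Set.Icc (-D) D with hSdef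
    have hSm : MeasurableSet S := hBoxm.prod measurableSet_Icc
    have hXYS : ∀ ω, (X ω, Y ω) ∈ S := fun ω =>
      Set.mem_prod.2 ⟨hXrange ω, Set.mem_Icc.2 (abs_le.1 (hYrange ω))⟩
    have hpre : (fun ω => (X ω, Y ω)) ⁻¹' Sᶜ = ∅ := by
      ext ω
      simp [hXYS ω]
    have h0 : P.map (fun ω => (X ω, Y ω)) Sᶜ = 0 := by
      rw [Measure.map_apply hXYmeas hSm.compl, hpre, measure_empty]
    have h1 : P ((fun ω => (Xi i ω, Yi i ω)) ⁻¹' Sᶜ) = 0 := by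
      rw [← Measure.map_apply (hprod_meas i) hSm.compl, hIdent i]
      exact h0
    have hseteq : {ω | ¬(Xi i ω ∈ Box ∧ |Yi i ω| ≤ D)}
        = (fun ω => (Xi i ω, Yi i ω)) ⁻¹' Sᶜ := by
      ext ω
      simp only [Set.mem_setOf_eq, Set.mem_preimage, Set.mem_compl_iff, hSdef,
        Set.mem_prod, Set.mem_Icc, abs_le]
    rw [ae_iff]
    rw [show {ω | ¬(Xi i ω ∈ Box ∧ |Yi i ω| ≤ D)}
        = (fun ω => (Xi i ω, Yi i ω)) ⁻¹' Sᶜ from hseteq]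
    exact h1
  have hG : ∀ᵐ ω ∂P, ∀ i, Xi i ω ∈ Box ∧ |Yi i ω| ≤ D := ae_all_iff.2 hnull
  -- per-cover-element quantities
  set μc : Fin N → ℝ := fun j => ∫ ω', (c j (X ω') - Y ω')^2 ∂P with hμc
  have hgmeas : ∀ j, Measurable (fun p : (Fin d → ℝ) × ℝ => ((c j p.1 - p.2)^2 : ℝ)) :=
    fun j => (((hHmeas _ (hc j)).comp measurable_fst).sub measurable_snd).pow_const 2
  have hmean_ji : ∀ j i, ∫ ω, (c j (Xi i ω) - Yi i ω)^2 ∂P = μc j := by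
    intro j i
    calc ∫ ω, (c j (Xi i ω) - Yi i ω)^2 ∂P
        = ∫ p, (c j p.1 - p.2)^2 ∂(P.map (fun ω => (Xi i ω, Yi i ω))) :=
          (integral_map (hprod_meas i).aemeasurable (hgmeas j).aestronglyMeasurable).symm
      _ = ∫ p, (c j p.1 - p.2)^2 ∂(P.map (fun ω => (X ω, Y ω))) := by rw [hIdent i]
      _ = μc j := integral_map hXYmeas.aemeasurable (hgmeas j).aestronglyMeasurable
  have hμc_nonneg : ∀ j, 0 ≤ μc j := fun j => integral_nonneg fun ω => sq_nonneg _
  have hμc_le : ∀ j, μc j ≤ 4*D^2 := by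
    intro j
    have h1 : ∫ ω', (c j (X ω') - Y ω')^2 ∂P ≤ ∫ _ω', (4*D^2:ℝ) ∂P := by
      refine integral_mono (hint _ (hc j)) (integrable_const _) fun ω => ?_
      have h1 := hHbdd _ (hc j) _ (hXrange ω)
      have h2 := hYrange ω
      rw [abs_le] at h1 h2
      nlinarith
    simpa using h1
  have hsq_bdd : ∀ j i, ∀ᵐ ω ∂P, (c j (Xi i ω) - Yi i ω)^2 ∈ Set.Icc (0:ℝ) (4*D^2) := by
    intro j i
    filter_upwards [hnull i] with ω hω
    have h1 := hHbdd _ (hc j) _ hω.1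
    have h2 := hω.2
    rw [abs_le] at h1 h2
    exact ⟨sq_nonneg _, by nlinarith⟩
  have hsq_meas : ∀ j i, Measurable (fun ω => ((c j (Xi i ω) - Yi i ω)^2 : ℝ)) :=
    fun j i => (((hHmeas _ (hc j)).comp (hXi i)).sub (hYi i)).pow_const 2
  have hsq_int : ∀ j i, Integrable (fun ω => (c j (Xi i ω) - Yi i ω)^2) P := by
    intro j i
    refine integrable_of_bdd (hsq_meas j i) (C := 4*D^2) ?_
    filter_upwards [hsq_bdd j i] with ω hω
    rw [abs_of_nonneg (sq_nonneg _)]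
    exact hω.2
  have e0pos : (0:ℝ) < Real.exp (-(m * ε^2)/(128*D^4)) := Real.exp_pos _
  set Bset : Fin N → Set Ω := fun j =>
    {ω | |∑ i, (c j (Xi i ω) - Yi i ω)^2 - m * μc j| ≤ m * (ε/4)} with hBset
  have hBm : ∀ j, MeasurableSet (Bset j) := by
    intro j
    exact measurableSet_le
      (((Finset.measurable_sum Finset.univ fun i _ => hsq_meas j i).sub
        measurable_const).abs) measurable_const
  have htail : ∀ j, P ((Bset j)ᶜ)
      ≤ ENNReal.ofReal (2 * Real.exp (-(m * ε^2)/(128*D^4))) := by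
    intro j
    have hWmeas : ∀ i, Measurable (fun ω => ((c j (Xi i ω) - Yi i ω)^2 - μc j : ℝ)) :=
      fun i => (hsq_meas j i).sub measurable_const
    have hW'meas : ∀ i, Measurable (fun ω => (μc j - (c j (Xi i ω) - Yi i ω)^2 : ℝ)) :=
      fun i => measurable_const.sub (hsq_meas j i)
    have hWindep : iIndepFun
        (fun i ω => ((c j (Xi i ω) - Yi i ω)^2 - μc j : ℝ)) P :=
      hIndep.comp (fun _ p => (c j p.1 - p.2)^2 - μc j)
        (fun _ => (hgmeas j).sub measurable_const)
    have hW'indep : iIndepFun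
        (fun i ω => (μc j - (c j (Xi i ω) - Yi i ω)^2 : ℝ)) P :=
      hIndep.comp (fun _ p => μc j - (c j p.1 - p.2)^2)
        (fun _ => measurable_const.sub (hgmeas j))
    have hWbd : ∀ i, ∀ᵐ ω ∂P,
        ((c j (Xi i ω) - Yi i ω)^2 - μc j) ∈ Set.Icc (-(μc j)) (4*D^2 - μc j) := by
      intro i
      filter_upwards [hsq_bdd j i] with ω hω
      exact ⟨by linarith [hω.1], by linarith [hω.2]⟩
    have hW'bd : ∀ i, ∀ᵐ ω ∂P,
        (μc j - (c j (Xi i ω) - Yi i ω)^2) ∈ Set.Icc (μc j - 4*D^2) (μc j) := by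
      intro i
      filter_upwards [hsq_bdd j i] with ω hω
      exact ⟨by linarith [hω.2], by linarith [hω.1]⟩
    have hWmean : ∀ i, ∫ ω, ((c j (Xi i ω) - Yi i ω)^2 - μc j) ∂P = 0 := by
      intro i
      rw [integral_sub (hsq_int j i) (integrable_const _), hmean_ji j i, integral_const]
      simp
    have hW'mean : ∀ i, ∫ ω, (μc j - (c j (Xi i ω) - Yi i ω)^2) ∂P = 0 := by
      intro i
      rw [integral_sub (integrable_const _) (hsq_int j i), hmean_ji j i, integral_const]
      simp
    have hup := hoeffding_sum P hWmeas hWindep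
      (a := -(μc j)) (b := 4*D^2 - μc j) (by nlinarith) hWbd hWmean
      (s := ε/4) (by positivity)
    have hlo := hoeffding_sum P hW'meas hW'indep
      (a := μc j - 4*D^2) (b := μc j) (by nlinarith) hW'bd hW'mean
      (s := ε/4) (by positivity)
    have hD4 : (D:ℝ)^4 ≠ 0 := by positivity
    have hexp_eq1 : -2 * (m:ℝ) * (ε/4)^2 / ((4*D^2 - μc j) - (-(μc j)))^2
        = -((m:ℝ)*ε^2)/(128*D^4) := by
      field_simp
      ring
    have hexp_eq2 : -2 * (m:ℝ) * (ε/4)^2 / ((μc j) - (μc j - 4*D^2))^2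
        = -((m:ℝ)*ε^2)/(128*D^4) := by
      field_simp
      ring
    rw [hexp_eq1] at hup
    rw [hexp_eq2] at hlo
    have hupE : P {ω | (m:ℝ)*(ε/4) ≤ ∑ i, ((c j (Xi i ω) - Yi i ω)^2 - μc j)}
        ≤ ENNReal.ofReal (Real.exp (-((m:ℝ)*ε^2)/(128*D^4))) := by
      rw [ENNReal.le_ofReal_iff_toReal_le (measure_ne_top P _) e0pos.le]
      exact hup
    have hloE : P {ω | (m:ℝ)*(ε/4) ≤ ∑ i, (μc j - (c j (Xi i ω) - Yi i ω)^2)}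
        ≤ ENNReal.ofReal (Real.exp (-((m:ℝ)*ε^2)/(128*D^4))) := by
      rw [ENNReal.le_ofReal_iff_toReal_le (measure_ne_top P _) e0pos.le]
      exact hlo
    have hincl : (Bset j)ᶜ ⊆
        {ω | (m:ℝ)*(ε/4) ≤ ∑ i, ((c j (Xi i ω) - Yi i ω)^2 - μc j)}
        ∪ {ω | (m:ℝ)*(ε/4) ≤ ∑ i, (μc j - (c j (Xi i ω) - Yi i ω)^2)} := by
      intro ω hω
      simp only [hBset, Set.mem_compl_iff, Set.mem_setOf_eq, not_le] at hω
      have hsum1 : ∑ i, ((c j (Xi i ω) - Yi i ω)^2 - μc j)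
          = ∑ i, (c j (Xi i ω) - Yi i ω)^2 - m * μc j := by
        rw [Finset.sum_sub_distrib, Finset.sum_const, Finset.card_univ,
          Fintype.card_fin, nsmul_eq_mul]
      have hsum2 : ∑ i, (μc j - (c j (Xi i ω) - Yi i ω)^2)
          = m * μc j - ∑ i, (c j (Xi i ω) - Yi i ω)^2 := by
        rw [Finset.sum_sub_distrib, Finset.sum_const, Finset.card_univ,
          Fintype.card_fin, nsmul_eq_mul]
      rcases le_total 0 (∑ i, (c j (Xi i ω) - Yi i ω)^2 - m * μc j) with hsgn | hsgn
      · left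
        rw [Set.mem_setOf_eq, hsum1]
        rw [abs_of_nonneg hsgn] at hω
        linarith
      · right
        rw [Set.mem_setOf_eq, hsum2]
        rw [abs_of_nonpos hsgn] at hω
        linarith
    calc P ((Bset j)ᶜ)
        ≤ P ({ω | (m:ℝ)*(ε/4) ≤ ∑ i, ((c j (Xi i ω) - Yi i ω)^2 - μc j)}
            ∪ {ω | (m:ℝ)*(ε/4) ≤ ∑ i, (μc j - (c j (Xi i ω) - Yi i ω)^2)}) :=
          measure_mono hincl
      _ ≤ P {ω | (m:ℝ)*(ε/4) ≤ ∑ i, ((c j (Xi i ω) - Yi i ω)^2 - μc j)}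
          + P {ω | (m:ℝ)*(ε/4) ≤ ∑ i, (μc j - (c j (Xi i ω) - Yi i ω)^2)} :=
          measure_union_le _ _
      _ ≤ ENNReal.ofReal (Real.exp (-((m:ℝ)*ε^2)/(128*D^4)))
          + ENNReal.ofReal (Real.exp (-((m:ℝ)*ε^2)/(128*D^4))) := add_le_add hupE hloE
      _ = ENNReal.ofReal (2 * Real.exp (-((m:ℝ)*ε^2)/(128*D^4))) := by
          rw [← ENNReal.ofReal_add e0pos.le e0pos.le]
          ring_nf
  -- union bound
  set Egood : Set Ω := ⋂ j, Bset j with hEgood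
  have hEmeas : MeasurableSet Egood := MeasurableSet.iInter fun j => hBm j
  have hEc : P Egoodᶜ ≤ ENNReal.ofReal (2 * N * Real.exp (-((m:ℝ) * ε^2)/(128*D^4))) := by
    rw [hEgood, Set.compl_iInter]
    calc P (⋃ j, (Bset j)ᶜ) ≤ ∑' j, P ((Bset j)ᶜ) := measure_iUnion_le _
      _ = ∑ j, P ((Bset j)ᶜ) := tsum_fintype _
      _ ≤ ∑ _j : Fin N, ENNReal.ofReal (2 * Real.exp (-((m:ℝ)*ε^2)/(128*D^4))) :=
          Finset.sum_le_sum fun j _ => htail j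
      _ = (N : ENNReal) * ENNReal.ofReal (2 * Real.exp (-((m:ℝ)*ε^2)/(128*D^4))) := by
          rw [Finset.sum_const, Finset.card_univ, Fintype.card_fin, nsmul_eq_mul]
      _ = ENNReal.ofReal (2 * N * Real.exp (-((m:ℝ)*ε^2)/(128*D^4))) := by
          rw [← ENNReal.ofReal_natCast N, ← ENNReal.ofReal_mul (Nat.cast_nonneg N)]
          congr 1
          ring
  have hEgood_lb : ENNReal.ofReal (1 - 2*N*Real.exp (-((m:ℝ)*ε^2)/(128*D^4)))
      ≤ P Egood := by
    have h1 : P Egood = 1 - P Egoodᶜ := by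
      have := prob_compl_eq_one_sub (μ := P) hEmeas.compl
      rwa [compl_compl] at this
    rw [h1]
    have h2 : ENNReal.ofReal (1 - 2*N*Real.exp (-((m:ℝ)*ε^2)/(128*D^4)))
        + ENNReal.ofReal (2*N*Real.exp (-((m:ℝ)*ε^2)/(128*D^4))) = 1 := by
      rw [← ENNReal.ofReal_add (by linarith) (by positivity)]
      norm_num
    have h3 : ENNReal.ofReal (1 - 2*N*Real.exp (-((m:ℝ)*ε^2)/(128*D^4)))
        = 1 - ENNReal.ofReal (2*N*Real.exp (-((m:ℝ)*ε^2)/(128*D^4))) :=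
      ENNReal.eq_sub_of_add_eq ENNReal.ofReal_ne_top h2
    rw [h3]
    exact tsub_le_tsub_left hEc 1
  -- the good sample range set
  set Gset : Set Ω := {ω | ∀ i, Xi i ω ∈ Box ∧ |Yi i ω| ≤ D} with hGset
  have hGnull : P Gsetᶜ = 0 := by
    rw [hGset, Set.compl_setOf]
    exact ae_iff.1 hG
  -- the deterministic argument
  have hsubset : Egood ∩ Gset ⊆ {ω | (∫ ω', (fhat ω (X ω') - Y ω')^2 ∂P)
      - (∫ ω', (fH (X ω') - Y ω')^2 ∂P) ≤ ε} := by
    rintro ω ⟨hB, hGω⟩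
    rw [hEgood, Set.mem_iInter] at hB
    rw [hGset, Set.mem_setOf_eq] at hGω
    rw [Set.mem_setOf_eq]
    set Em : ((Fin d → ℝ) → ℝ) → ℝ :=
      fun f => (1/(m:ℝ)) * ∑ i, (f (Xi i ω) - Yi i ω)^2 with hEmdef
    have hEmLip : ∀ f ∈ H, ∀ g ∈ H, ∀ r : ℝ, (∀ x ∈ Box, |f x - g x| ≤ r) →
        |Em f - Em g| ≤ 4*D*r := by
      intro f hf g hg r hr
      rw [hEmdef]
      simp only
      rw [← mul_sub, ← Finset.sum_sub_distrib, abs_mul,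
        abs_of_nonneg (by positivity : (0:ℝ) ≤ 1/(m:ℝ))]
      have hpt : ∀ i : Fin m,
          |(f (Xi i ω) - Yi i ω)^2 - (g (Xi i ω) - Yi i ω)^2| ≤ 4*D*r := fun i =>
        sq_risk_pt (hHbdd f hf _ (hGω i).1) (hHbdd g hg _ (hGω i).1) (hGω i).2
          (hr _ (hGω i).1)
      calc (1/(m:ℝ)) * |∑ i, ((f (Xi i ω) - Yi i ω)^2 - (g (Xi i ω) - Yi i ω)^2)|
          ≤ (1/(m:ℝ)) * ∑ i, |(f (Xi i ω) - Yi i ω)^2 - (g (Xi i ω) - Yi i ω)^2| :=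
            mul_le_mul_of_nonneg_left (Finset.abs_sum_le_sum_abs _ _) (by positivity)
        _ ≤ (1/(m:ℝ)) * ((m:ℝ) * (4*D*r)) := by
            refine mul_le_mul_of_nonneg_left ?_ (by positivity)
            calc ∑ i, |(f (Xi i ω) - Yi i ω)^2 - (g (Xi i ω) - Yi i ω)^2|
                ≤ ∑ _i : Fin m, (4*D*r) := Finset.sum_le_sum fun i _ => hpt i
              _ = (m:ℝ) * (4*D*r) := by
                  rw [Finset.sum_const, Finset.card_univ, Fintype.card_fin, nsmul_eq_mul]
        _ = 4*D*r := by field_simp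
    have hr8 : 4*D*(ε/(32*D)) = ε/8 := by
      field_simp
      ring
    have hclaim : ∀ f ∈ H, |(∫ ω', (f (X ω') - Y ω')^2 ∂P) - Em f| ≤ ε/2 := by
      intro f hf
      obtain ⟨j, hj⟩ := hcover f hf
      have h1 : |(∫ ω', (f (X ω') - Y ω')^2 ∂P)
          - (∫ ω', (c j (X ω') - Y ω')^2 ∂P)| ≤ ε/8 := by
        have := hriskLip f hf (c j) (hc j) _ hj
        rwa [hr8] at this
      have h2 : |Em f - Em (c j)| ≤ ε/8 := by
        have := hEmLip f hf (c j) (hc j) _ hj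
        rwa [hr8] at this
      have hBj : |∑ i, (c j (Xi i ω) - Yi i ω)^2 - m * μc j| ≤ m*(ε/4) := hB j
      have h3 : |Em (c j) - μc j| ≤ ε/4 := by
        have he : Em (c j) - μc j
            = (1/(m:ℝ)) * (∑ i, (c j (Xi i ω) - Yi i ω)^2 - m * μc j) := by
          rw [hEmdef]
          simp only
          field_simp
        rw [he, abs_mul, abs_of_nonneg (by positivity : (0:ℝ) ≤ 1/(m:ℝ))]
        calc (1/(m:ℝ)) * |∑ i, (c j (Xi i ω) - Yi i ω)^2 - m * μc j|
            ≤ (1/(m:ℝ)) * ((m:ℝ)*(ε/4)) :=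
              mul_le_mul_of_nonneg_left hBj (by positivity)
          _ = ε/4 := by field_simp
      have hμeq : (∫ ω', (c j (X ω') - Y ω')^2 ∂P) = μc j := by rw [hμc]
      rw [hμeq] at h1
      rw [abs_le] at h1 h2 h3 ⊢
      exact ⟨by linarith, by linarith⟩
    have h4 := hclaim (fhat ω) (hfhatH ω)
    have h5 := hclaim fH hfH
    have h6 : Em (fhat ω) ≤ Em fH := hfhatmin ω fH hfH
    rw [abs_le] at h4 h5
    linarith [h4.1, h4.2, h5.1, h5.2, hε.2]
  have hfinal : P Egood ≤ P {ω | (∫ ω', (fhat ω (X ω') - Y ω')^2 ∂P)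
      - (∫ ω', (fH (X ω') - Y ω')^2 ∂P) ≤ ε} := by
    have hsub2 : Egood ⊆ {ω | (∫ ω', (fhat ω (X ω') - Y ω')^2 ∂P)
        - (∫ ω', (fH (X ω') - Y ω')^2 ∂P) ≤ ε} ∪ Gsetᶜ := by
      intro ω hω
      by_cases hg : ω ∈ Gset
      · exact Or.inl (hsubset ⟨hω, hg⟩)
      · exact Or.inr hg
    calc P Egood ≤ P ({ω | (∫ ω', (fhat ω (X ω') - Y ω')^2 ∂P)
          - (∫ ω', (fH (X ω') - Y ω')^2 ∂P) ≤ ε} ∪ Gsetᶜ) := measure_mono hsub2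
      _ ≤ P {ω | (∫ ω', (fhat ω (X ω') - Y ω')^2 ∂P)
          - (∫ ω', (fH (X ω') - Y ω')^2 ∂P) ≤ ε} + P Gsetᶜ := measure_union_le _ _
      _ = P {ω | (∫ ω', (fhat ω (X ω') - Y ω')^2 ∂P)
          - (∫ ω', (fH (X ω') - Y ω')^2 ∂P) ≤ ε} := by rw [hGnull, add_zero]
  exact le_trans hEgood_lb hfinal
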